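/- Let I and J be finite sets of pairwise distinct labels and let σ_l (l ∈ I) and τ_l (l ∈ J) be types in 𝕋. Then ⟨l:σ_l | l ∈ I⟩ + ⟨l:τ_l | l ∈ J⟩ = ⟨l:σ_l, l′:τ_{l′} | l ∈ I∖J, l′ ∈ J⟩, i.e. the type-merge of two record types is the record type whose entries are σ_l on I∖J and τ_{l′} on all of J. -/

import Mathlib

/-- Intersection and record types `𝕋`. Record types are the types satisfying `IsRec`. -/
inductive Ty where
  | const : Nat → Ty
  | omega : Ty
  | arrow : Ty → Ty → Ty
  | inter : Ty → Ty → Ty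
  | empty : Ty
  | fld : Nat → Ty → Ty
  | merge : Ty → Ty → Ty
deriving DecidableEq

/-- The record types `𝕋_R ⊆ 𝕋`. -/
inductive IsRec : Ty → Prop where
  | empty : IsRec .empty
  | fld (l : Nat) (σ : Ty) : IsRec (.fld l σ)
  | merge {ρ₁ ρ₂ : Ty} : IsRec ρ₁ → IsRec ρ₂ → IsRec (.merge ρ₁ ρ₂)
  | inter {ρ₁ ρ₂ : Ty} : IsRec ρ₁ → IsRec ρ₂ → IsRec (.inter ρ₁ ρ₂)

/-- Subtyping on `𝕋`: the least preorder satisfying the BCD axioms together with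
the record and record-merge axioms. -/
inductive TySub : Ty → Ty → Prop where
  | refl (σ : Ty) : TySub σ σ
  | trans {σ τ υ : Ty} : TySub σ τ → TySub τ υ → TySub σ υ
  | le_omega (σ : Ty) : TySub σ .omega
  | omega_arrow : TySub .omega (.arrow .omega .omega)
  | inter_left (σ τ : Ty) : TySub (.inter σ τ) σ
  | inter_right (σ τ : Ty) : TySub (.inter σ τ) τ
  | le_inter {σ τ₁ τ₂ : Ty} : TySub σ τ₁ → TySub σ τ₂ → TySub σ (.inter τ₁ τ₂)
  | arrow_inter (σ τ₁ τ₂ : Ty) :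
      TySub (.inter (.arrow σ τ₁) (.arrow σ τ₂)) (.arrow σ (.inter τ₁ τ₂))
  | arrow_mono {σ₁ σ₂ τ₁ τ₂ : Ty} : TySub σ₂ σ₁ → TySub τ₁ τ₂ →
      TySub (.arrow σ₁ τ₁) (.arrow σ₂ τ₂)
  | fld_empty (l : Nat) (σ : Ty) : TySub (.fld l σ) .empty
  | fld_inter (l : Nat) (σ τ : Ty) :
      TySub (.inter (.fld l σ) (.fld l τ)) (.fld l (.inter σ τ))
  | fld_mono {σ τ : Ty} (l : Nat) : TySub σ τ → TySub (.fld l σ) (.fld l τ)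
  | merge_empty_r {ρ : Ty} : IsRec ρ → TySub (.merge ρ .empty) ρ
  | merge_empty_r' {ρ : Ty} : IsRec ρ → TySub ρ (.merge ρ .empty)
  | merge_empty_l {ρ : Ty} : IsRec ρ → TySub (.merge .empty ρ) ρ
  | merge_empty_l' {ρ : Ty} : IsRec ρ → TySub ρ (.merge .empty ρ)
  | merge_assoc {ρ₁ ρ₂ ρ₃ : Ty} : IsRec ρ₁ → IsRec ρ₂ → IsRec ρ₃ →
      TySub (.merge (.merge ρ₁ ρ₂) ρ₃) (.merge ρ₁ (.merge ρ₂ ρ₃))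
  | merge_assoc' {ρ₁ ρ₂ ρ₃ : Ty} : IsRec ρ₁ → IsRec ρ₂ → IsRec ρ₃ →
      TySub (.merge ρ₁ (.merge ρ₂ ρ₃)) (.merge (.merge ρ₁ ρ₂) ρ₃)
  | merge_inter {ρ₁ ρ₂ ρ₃ : Ty} : IsRec ρ₁ → IsRec ρ₂ → IsRec ρ₃ →
      TySub (.merge (.inter ρ₁ ρ₂) ρ₃) (.inter (.merge ρ₁ ρ₃) (.merge ρ₂ ρ₃))
  | merge_inter' {ρ₁ ρ₂ ρ₃ : Ty} : IsRec ρ₁ → IsRec ρ₂ → IsRec ρ₃ →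
      TySub (.inter (.merge ρ₁ ρ₃) (.merge ρ₂ ρ₃)) (.merge (.inter ρ₁ ρ₂) ρ₃)
  | fld_absorb {ρ : Ty} (l : Nat) (σ τ : Ty) : IsRec ρ →
      TySub (.merge (.fld l σ) (.inter (.fld l τ) ρ)) (.inter (.fld l τ) ρ)
  | fld_absorb' {ρ : Ty} (l : Nat) (σ τ : Ty) : IsRec ρ →
      TySub (.inter (.fld l τ) ρ) (.merge (.fld l σ) (.inter (.fld l τ) ρ))
  | fld_comm {ρ : Ty} {l l' : Nat} (σ τ : Ty) : l ≠ l' → IsRec ρ →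
      TySub (.merge (.fld l σ) (.inter (.fld l' τ) ρ))
          (.inter (.fld l' τ) (.merge (.fld l σ) ρ))
  | fld_comm' {ρ : Ty} {l l' : Nat} (σ τ : Ty) : l ≠ l' → IsRec ρ →
      TySub (.inter (.fld l' τ) (.merge (.fld l σ) ρ))
          (.merge (.fld l σ) (.inter (.fld l' τ) ρ))
  | merge_mono_l {ρ₁ ρ₂ ρ : Ty} : IsRec ρ₁ → IsRec ρ₂ → IsRec ρ →
      TySub ρ₁ ρ₂ → TySub (.merge ρ₁ ρ) (.merge ρ₂ ρ)
  | merge_congr_r {ρ ρ₁ ρ₂ : Ty} : IsRec ρ → IsRec ρ₁ → IsRec ρ₂ →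
      TySub ρ₁ ρ₂ → TySub ρ₂ ρ₁ → TySub (.merge ρ ρ₁) (.merge ρ ρ₂)

/-- Type equality: mutual subtyping. -/
def TyEq (σ τ : Ty) : Prop := TySub σ τ ∧ TySub τ σ
/-- `⟨l : σ_l | l ∈ I⟩`: the intersection of unary record types over a list of labels. -/
def recTy (σ : Nat → Ty) : List Nat → Ty
  | [] => .empty
  | [l] => .fld l (σ l)
  | l :: l' :: ls => .inter (.fld l (σ l)) (recTy σ (l' :: ls))

namespace RecordMergeAux

theorem tyEq_refl (σ : Ty) : TyEq σ σ := ⟨.refl σ, .refl σ⟩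

theorem tyEq_symm {σ τ : Ty} (h : TyEq σ τ) : TyEq τ σ := ⟨h.2, h.1⟩

theorem tyEq_trans {σ τ υ : Ty} (h₁ : TyEq σ τ) (h₂ : TyEq τ υ) : TyEq σ υ :=
  ⟨h₁.1.trans h₂.1, h₂.2.trans h₁.2⟩

theorem isRec_recTy (σ : Nat → Ty) : ∀ L, IsRec (recTy σ L)
  | [] => .empty
  | [l] => .fld l (σ l)
  | _ :: l' :: ls => .inter (.fld _ _) (isRec_recTy σ (l' :: ls))

theorem inter_congr {a b c d : Ty} (h₁ : TyEq a b) (h₂ : TyEq c d) :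
    TyEq (.inter a c) (.inter b d) :=
  ⟨.le_inter ((TySub.inter_left a c).trans h₁.1) ((TySub.inter_right a c).trans h₂.1),
   .le_inter ((TySub.inter_left b d).trans h₁.2) ((TySub.inter_right b d).trans h₂.2)⟩

theorem merge_congr {a b c d : Ty} (ha : IsRec a) (hb : IsRec b) (hc : IsRec c)
    (hd : IsRec d) (h₁ : TyEq a b) (h₂ : TyEq c d) :
    TyEq (.merge a c) (.merge b d) :=
  ⟨(TySub.merge_mono_l ha hb hc h₁.1).trans (TySub.merge_congr_r hb hc hd h₂.1 h₂.2),
   (TySub.merge_mono_l hb ha hd h₁.2).trans (TySub.merge_congr_r ha hd hc h₂.2 h₂.1)⟩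

theorem recTy_head (σ : Nat → Ty) (l : Nat) (ls : List Nat) :
    TyEq (recTy σ (l :: ls)) (.inter (.fld l (σ l)) (recTy σ ls)) := by
  cases ls with
  | nil =>
      exact ⟨.le_inter (.refl _) (.fld_empty l (σ l)), .inter_left _ _⟩
  | cons l' ls => exact tyEq_refl _

theorem recTy_le_empty (σ : Nat → Ty) : ∀ L, TySub (recTy σ L) .empty
  | [] => .refl _
  | [l] => .fld_empty l (σ l)
  | _ :: l' :: ls => (TySub.inter_right _ _).trans (recTy_le_empty σ (l' :: ls))

theorem recTy_le_mem (σ : Nat → Ty) : ∀ {L l}, l ∈ L → TySub (recTy σ L) (.fld l (σ l))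
  | [], _, h => by simp at h
  | [l'], l, h => by
      simp at h; subst h; exact .refl _
  | l' :: l'' :: ls, l, h => by
      rcases List.mem_cons.mp h with h | h
      · subst h; exact .inter_left _ _
      · exact (TySub.inter_right _ _).trans (recTy_le_mem σ h)

theorem le_recTy {X : Ty} {σ : Nat → Ty} :
    ∀ {L}, TySub X .empty → (∀ l ∈ L, TySub X (.fld l (σ l))) → TySub X (recTy σ L)
  | [], he, _ => he
  | [l], _, h => h l (by simp)
  | l :: l' :: ls, he, h =>
      TySub.le_inter (h l (by simp))
        (le_recTy he (fun x hx => h x (List.mem_cons_of_mem _ hx)))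

theorem recTy_congr {f g : Nat → Ty} :
    ∀ {L}, (∀ l ∈ L, f l = g l) → recTy f L = recTy g L
  | [], _ => rfl
  | [l], h => by simp [recTy, h l (by simp)]
  | l :: l' :: ls, h => by
      have h1 := h l (by simp)
      have h2 := recTy_congr (f := f) (g := g) (L := l' :: ls)
        (fun x hx => h x (List.mem_cons_of_mem _ hx))
      simp only [recTy, h1, h2]

theorem inter_swap (a b c : Ty) :
    TyEq (.inter a (.inter b c)) (.inter b (.inter a c)) :=
  ⟨.le_inter ((TySub.inter_right _ _).trans (.inter_left _ _))
      (.le_inter (.inter_left _ _) ((TySub.inter_right _ _).trans (.inter_right _ _))),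
   .le_inter ((TySub.inter_right _ _).trans (.inter_left _ _))
      (.le_inter (.inter_left _ _) ((TySub.inter_right _ _).trans (.inter_right _ _)))⟩

/-- Merging a single field whose label occurs in `J` is absorbed. -/
theorem merge_fld_mem {l : Nat} (σ₀ : Ty) (τ : Nat → Ty) :
    ∀ {J}, l ∈ J → TyEq (.merge (.fld l σ₀) (recTy τ J)) (recTy τ J)
  | [], h => by simp at h
  | l' :: ls, h => by
      have hrec := isRec_recTy τ ls
      have hhead := recTy_head τ l' ls
      have hm : TyEq (Ty.merge (.fld l σ₀) (recTy τ (l' :: ls)))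
          (Ty.merge (.fld l σ₀) (.inter (.fld l' (τ l')) (recTy τ ls))) :=
        merge_congr (.fld _ _) (.fld _ _) (isRec_recTy τ _) (.inter (.fld _ _) hrec)
          (tyEq_refl _) hhead
      by_cases hl : l = l'
      · subst hl
        exact tyEq_trans hm (tyEq_trans ⟨.fld_absorb l σ₀ (τ l) hrec, .fld_absorb' l σ₀ (τ l) hrec⟩
          (tyEq_symm hhead))
      · have hmem : l ∈ ls := by
          rcases List.mem_cons.mp h with h | h
          · exact absurd h hl
          · exact h
        have ih := merge_fld_mem (l := l) σ₀ τ hmem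
        refine tyEq_trans hm (tyEq_trans ⟨.fld_comm σ₀ (τ l') hl hrec, .fld_comm' σ₀ (τ l') hl hrec⟩ ?_)
        refine tyEq_trans (inter_congr (tyEq_refl _) ih) (tyEq_symm hhead)

/-- Merging a single field whose label does not occur in `J` becomes an intersection. -/
theorem merge_fld_not_mem {l : Nat} (σ₀ : Ty) (τ : Nat → Ty) :
    ∀ {J}, l ∉ J → TyEq (.merge (.fld l σ₀) (recTy τ J))
      (.inter (.fld l σ₀) (recTy τ J))
  | [], _ =>
      ⟨(TySub.merge_empty_r (.fld l σ₀)).trans (.le_inter (.refl _) (.fld_empty l σ₀)),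
       (TySub.inter_left _ _).trans (.merge_empty_r' (.fld l σ₀))⟩
  | l' :: ls, h => by
      have hl : l ≠ l' := fun e => h (e ▸ (List.mem_cons_self : l' ∈ l' :: ls))
      have hls : l ∉ ls := fun e => h (List.mem_cons_of_mem _ e)
      have hrec := isRec_recTy τ ls
      have hhead := recTy_head τ l' ls
      have hm : TyEq (Ty.merge (.fld l σ₀) (recTy τ (l' :: ls)))
          (Ty.merge (.fld l σ₀) (.inter (.fld l' (τ l')) (recTy τ ls))) :=
        merge_congr (.fld _ _) (.fld _ _) (isRec_recTy τ _) (.inter (.fld _ _) hrec)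
          (tyEq_refl _) hhead
      have ih := merge_fld_not_mem (l := l) σ₀ τ hls
      refine tyEq_trans hm (tyEq_trans ⟨.fld_comm σ₀ (τ l') hl hrec, .fld_comm' σ₀ (τ l') hl hrec⟩ ?_)
      refine tyEq_trans (inter_congr (tyEq_refl _) ih) ?_
      refine tyEq_trans (inter_swap _ _ _) (inter_congr (tyEq_refl _) (tyEq_symm hhead))

end RecordMergeAux

/-- Type-merge of two record types: entries `σ_l` on `I∖J` and `τ_l` on all of `J`. -/
theorem record_merge (I J : List Nat) (hI : I.Nodup) (hJ : J.Nodup)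
    (σ τ : Nat → Ty) :
    TyEq (.merge (recTy σ I) (recTy τ J))
      (recTy (fun l => if l ∈ J then τ l else σ l)
        (I.filter (fun l => decide (l ∉ J)) ++ J)) := by
  open RecordMergeAux in
  induction I with
  | nil =>
      have : recTy (fun l => if l ∈ J then τ l else σ l) (List.filter (fun l => decide (l ∉ J)) [] ++ J)
          = recTy τ J := by
        simp only [List.filter_nil, List.nil_append]
        exact recTy_congr (fun l hl => by simp [hl])
      rw [this]
      exact ⟨.merge_empty_l (isRec_recTy τ J), .merge_empty_l' (isRec_recTy τ J)⟩
  | cons l ls ih =>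
      have hls : ls.Nodup := (List.nodup_cons.mp hI).2
      have ih := ih hls
      set σ'' : Nat → Ty := fun l => if l ∈ J then τ l else σ l with hσ''
      set R : Ty := recTy σ'' (ls.filter (fun l => decide (l ∉ J)) ++ J) with hR
      have hRrec : IsRec R := isRec_recTy _ _
      have hJrec : IsRec (recTy τ J) := isRec_recTy τ J
      have hRleJ : TySub R (recTy τ J) := by
        refine le_recTy (recTy_le_empty _ _) (fun x hx => ?_)
        have hmem : x ∈ ls.filter (fun l => decide (l ∉ J)) ++ J :=
          List.mem_append_right _ hx
        have h1 := recTy_le_mem σ'' hmem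
        have hx' : σ'' x = τ x := by simp [hσ'', hx]
        rw [hx'] at h1
        exact h1
      have step1 : TyEq (Ty.merge (recTy σ (l :: ls)) (recTy τ J))
          (Ty.merge (.inter (.fld l (σ l)) (recTy σ ls)) (recTy τ J)) :=
        merge_congr (isRec_recTy σ _) (.inter (.fld _ _) (isRec_recTy σ ls)) hJrec hJrec
          (recTy_head σ l ls) (tyEq_refl _)
      have step2 : TyEq (Ty.merge (.inter (.fld l (σ l)) (recTy σ ls)) (recTy τ J))
          (.inter (Ty.merge (.fld l (σ l)) (recTy τ J)) (Ty.merge (recTy σ ls) (recTy τ J))) :=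
        ⟨.merge_inter (.fld _ _) (isRec_recTy σ ls) hJrec,
         .merge_inter' (.fld _ _) (isRec_recTy σ ls) hJrec⟩
      by_cases hlJ : l ∈ J
      · have hfil : (l :: ls).filter (fun l => decide (l ∉ J)) = ls.filter (fun l => decide (l ∉ J)) := by
          simp [List.filter_cons, hlJ]
        rw [hfil]
        refine tyEq_trans step1 (tyEq_trans step2 ?_)
        refine tyEq_trans (inter_congr (merge_fld_mem (σ l) τ hlJ) ih) ?_
        exact ⟨.inter_right _ _, .le_inter hRleJ (.refl _)⟩
      · have hfil : (l :: ls).filter (fun l => decide (l ∉ J)) ++ J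
            = l :: (ls.filter (fun l => decide (l ∉ J)) ++ J) := by
          simp [List.filter_cons, hlJ]
        rw [hfil]
        have hhead : TyEq (recTy σ'' (l :: (ls.filter (fun l => decide (l ∉ J)) ++ J)))
            (.inter (.fld l (σ'' l)) R) := recTy_head σ'' l _
        have hσl : σ'' l = σ l := by simp [hσ'', hlJ]
        rw [hσl] at hhead
        refine tyEq_trans step1 (tyEq_trans step2 ?_)
        refine tyEq_trans (inter_congr (merge_fld_not_mem (σ l) τ hlJ) ih) ?_
        refine tyEq_trans ?_ (tyEq_symm hhead)
        constructor
        · exact .le_inter ((TySub.inter_left _ _).trans (.inter_left _ _)) (.inter_right _ _)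
        · exact .le_inter (.le_inter (.inter_left _ _) ((TySub.inter_right _ _).trans hRleJ)) (.inter_right _ _)
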